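/- The grounding kernel K_G of a directed graph G is a grounding set of G. -/

import Mathlib

/-- The grounding kernel of `G` is a grounding set of `G`. -/
theorem kernel_is_grounding {V : Type*} [Fintype V] (E : V → V → Prop)
    (R : Set V → Set V)
    (hR : ∀ U, R U = U ∪ {v | ∀ u, E u v → u ∈ U})
    (Rstar : Set V → Set V)
    (hRstar : ∀ U, Rstar U = ⋃ k : ℕ, R^[k] U)
    -- `V'`: vertices whose strongly connected component is a singleton with no self-loop
    (V' : Set V)
    (hV' : V' = {u | {w | Relation.ReflTransGen E u w ∧
      Relation.ReflTransGen E w u} = {u} ∧ ¬ E u u})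
    -- `N*(u)`: vertices reachable from `u` (possibly by the trivial path)
    (Nstar : V → Set V)
    (hNstar : ∀ u, Nstar u = {v | Relation.ReflTransGen E u v})
    (K : Set V)
    (hK : K = Set.univ \ {u | u ∈ V' ∧ Nstar u ⊆ V'}) :
    Rstar K = Set.univ := by
  -- vertices not in K are in the "bad" set D
  have hKmem : ∀ v, v ∉ K → v ∈ V' ∧ Nstar v ⊆ V' := by
    intro v hv
    rw [hK] at hv
    simpa using hv
  have hsub : ∀ U : Set V, U ⊆ R U := by
    intro U
    rw [hR U]
    exact Set.subset_union_left
  have hiter : ∀ (k : ℕ) (U : Set V), U ⊆ R^[k] U := by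
    intro k
    induction k with
    | zero => intro U; simp
    | succ k ih =>
      intro U
      rw [Function.iterate_succ_apply']
      exact (ih U).trans (hsub _)
  have hmono : ∀ {k m : ℕ}, k ≤ m → ∀ U : Set V, R^[k] U ⊆ R^[m] U := by
    intro k m hkm U
    obtain ⟨d, rfl⟩ := Nat.le.dest hkm
    rw [Nat.add_comm, Function.iterate_add_apply]
    exact hiter d _
  -- closure property of Rstar K
  have hclosed : ∀ v, (∀ u, E u v → u ∈ Rstar K) → v ∈ Rstar K := by
    intro v hv
    have hch : ∀ u : V, ∃ k : ℕ, E u v → u ∈ R^[k] K := by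
      intro u
      by_cases h : E u v
      · have hu := hv u h
        rw [hRstar] at hu
        obtain ⟨k, hk⟩ := Set.mem_iUnion.1 hu
        exact ⟨k, fun _ => hk⟩
      · exact ⟨0, fun h' => absurd h' h⟩
    choose f hf using hch
    set N := Finset.univ.sup f with hN
    have hv2 : v ∈ R (R^[N] K) := by
      rw [hR]
      right
      intro u hu
      exact hmono (Finset.le_sup (Finset.mem_univ u)) K (hf u hu)
    rw [hRstar]
    refine Set.mem_iUnion.2 ⟨N + 1, ?_⟩
    rw [Function.iterate_succ_apply']
    exact hv2
  -- the well-founded relation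
  set r : V → V → Prop := fun u v => E u v ∧ (u ∈ V' ∧ Nstar u ⊆ V') with hr
  have hirr : ∀ u, ¬ Relation.TransGen r u u := by
    intro u h
    obtain ⟨c, ⟨hEuc, huD⟩, htc⟩ := Relation.TransGen.head'_iff.1 h
    have huV : u ∈ V' := huD.1
    rw [hV'] at huV
    obtain ⟨hset, hloop⟩ := huV
    have h1 : Relation.ReflTransGen E u c := Relation.ReflTransGen.single hEuc
    have h2 : Relation.ReflTransGen E c u :=
      Relation.ReflTransGen.mono (fun a b (hab : r a b) => hab.1) _ _ htc
    have hc : c ∈ {w | Relation.ReflTransGen E u w ∧ Relation.ReflTransGen E w u} :=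
      ⟨h1, h2⟩
    rw [hset] at hc
    exact hloop (hc ▸ hEuc)
  haveI : IsTrans V (Relation.TransGen r) := ⟨fun a b c => Relation.TransGen.trans⟩
  haveI : IsIrrefl V (Relation.TransGen r) := ⟨hirr⟩
  have hwfT : WellFounded (Relation.TransGen r) :=
    Finite.wellFounded_of_trans_of_irrefl _
  have hwf : WellFounded r :=
    Subrelation.wf (fun h => Relation.TransGen.single h) hwfT
  have main : ∀ v, v ∈ Rstar K := by
    intro v
    induction v using hwf.induction with
    | _ v ih =>
      by_cases hvK : v ∈ K
      · rw [hRstar]; exact Set.mem_iUnion.2 ⟨0, hvK⟩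
      · apply hclosed
        intro u hu
        by_cases huK : u ∈ K
        · rw [hRstar]; exact Set.mem_iUnion.2 ⟨0, huK⟩
        · exact ih u ⟨hu, hKmem u huK⟩
  exact Set.eq_univ_of_forall main
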